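/- Let C be a locally presentable category and G : D ⥤ C a functor admitting a left adjoint F. If for every regular cardinal κ, the only full subcategory of C containing the essential image of G that is closed under isomorphisms, under small limits, and under κ-filtered colimits is C itself, then F is conservative. -/

import Mathlib

open CategoryTheory CategoryTheory.Limits

universe w v u

namespace Paper

/-- A full subcategory (given by a set of objects) is closed under isomorphisms. -/
def IsoClosed {C : Type*} [Category C] (P : Set C) : Prop :=
  ∀ ⦃X Y : C⦄, X ∈ P → Nonempty (X ≅ Y) → Y ∈ P

/-- A set of objects is closed under all colimits of shapes `J : Type w` that exist in `C`:
whenever a diagram valued in `P` admits a colimit cocone, its point belongs to `P`. -/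
def ColimitClosed {C : Type u} [Category.{v} C] (P : Set C) : Prop :=
  ∀ (J : Type w) (_ : SmallCategory J) (F : J ⥤ C) (c : Cocone F),
    Nonempty (IsColimit c) → (∀ j : J, F.obj j ∈ P) → c.pt ∈ P

/-- A set of objects is closed under all limits of shapes `J : Type w` that exist in `C`. -/
def LimitClosed {C : Type u} [Category.{v} C] (P : Set C) : Prop :=
  ∀ (J : Type w) (_ : SmallCategory J) (F : J ⥤ C) (c : Cone F),
    Nonempty (IsLimit c) → (∀ j : J, F.obj j ∈ P) → c.pt ∈ P

/-- `S` generates `C` under colimits: the only set of objects containing `S` which is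
closed under isomorphisms and under all colimits that exist in `C` is all of `C`. -/
def GeneratesUnderColimits {C : Type u} [Category.{v} C] (S : Set C) : Prop :=
  ∀ P : Set C, S ⊆ P → IsoClosed P → ColimitClosed.{w} P → ∀ X : C, X ∈ P

/-- The smallest set of objects containing `S` which is closed under isomorphisms and
under all colimits (of shapes in `Type w`) that exist in `C`. -/
def colimitClosure {C : Type u} [Category.{v} C] (S : Set C) : Set C :=
  ⋂₀ {P : Set C | S ⊆ P ∧ IsoClosed P ∧ ColimitClosed.{w} P}

/-- A category `J` is `κ`-filtered if every diagram indexed by a small category with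
fewer than `κ` arrows admits a cocone. -/
def IsCardinalFiltered (J : Type w) [SmallCategory J] (κ : Cardinal.{w}) : Prop :=
  ∀ (K : Type w) (_ : SmallCategory K) (F : K ⥤ J),
    Cardinal.mk (Arrow K) < κ → Nonempty (Cocone F)

/-- A set of objects is closed under colimits of `κ`-filtered shapes that exist in `C`. -/
def FilteredColimitClosed {C : Type u} [Category.{v} C] (κ : Cardinal.{w}) (P : Set C) :
    Prop :=
  ∀ (J : Type w) (_ : SmallCategory J), IsCardinalFiltered J κ →
    ∀ (F : J ⥤ C) (c : Cocone F),
      Nonempty (IsColimit c) → (∀ j : J, F.obj j ∈ P) → c.pt ∈ P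

/-- An object `X` of a large category `C` is `κ`-presentable if its Hom-functor
`Hom(X, -) : C ⥤ Type u` preserves colimits of `κ`-filtered (small) shapes. -/
def IsPresentableObj {C : Type (u + 1)} [Category.{u} C] (κ : Cardinal.{u}) (X : C) : Prop :=
  ∀ (J : Type u) (_ : SmallCategory J), IsCardinalFiltered J κ →
    PreservesColimitsOfShape J (coyoneda.obj (Opposite.op X))

/-- A large category `C` is locally presentable if it has all small colimits and there is
a regular cardinal `κ` such that `C` has, up to isomorphism, only a small set of
`κ`-presentable objects and every object of `C` is a `κ`-filtered colimit of
`κ`-presentable objects. -/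
def LocallyPresentable (C : Type (u + 1)) [Category.{u} C] : Prop :=
  HasColimits C ∧
    ∃ κ : Cardinal.{u}, κ.IsRegular ∧
      (∃ S : Set C, Small.{u} S ∧
        ∀ X : C, IsPresentableObj κ X → ∃ Y ∈ S, Nonempty (X ≅ Y)) ∧
      ∀ X : C, ∃ (J : Type u) (_ : SmallCategory J) (F : J ⥤ C) (c : Cocone F),
        IsCardinalFiltered J κ ∧ (∀ j : J, IsPresentableObj κ (F.obj j)) ∧
        c.pt = X ∧ Nonempty (IsColimit c)

end Paper

namespace Paper

/-!
STATEMENT 13 (first direction of `PrR_Epi_Mono`): Let `C` be locally presentable and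
`G : D ⥤ C` admit a left adjoint `F`. If for every regular cardinal `κ`, the only full
subcategory of `C` containing the essential image of `G` and closed under isomorphisms,
small limits, and `κ`-filtered colimits is `C` itself, then `F` is conservative.
-/

section Gadget

universe u' v'

/-- Objects of the bipartite graph category: sources from `A`, targets from `B`. -/
inductive GV (A B : Type u) : Type u
  | src (a : A) : GV A B
  | tgt (b : B) : GV A B

/-- Homs of the "bipartite graph" category with edge set `E`. -/
inductive GHom {A B E : Type u} (es : E → A) (et : E → B) : GV A B → GV A B → Type u
  | id (x : GV A B) : GHom es et x x
  | edge (e : E) : GHom es et (GV.src (es e)) (GV.tgt (et e))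

/-- Composition of graph homs. -/
def GHom.comp {A B E : Type u} {es : E → A} {et : E → B} :
    ∀ {x y z : GV A B}, GHom es et x y → GHom es et y z → GHom es et x z
  | _, _, _, .id _, g => g
  | _, _, _, .edge e, .id _ => .edge e

/-- The bipartite graph category structure. -/
def graphCat {A B E : Type u} (es : E → A) (et : E → B) : SmallCategory (GV A B) where
  Hom x y := GHom es et x y
  id x := .id x
  comp f g := GHom.comp f g
  id_comp f := rfl
  comp_id f := by cases f <;> rfl
  assoc f g h := by cases f <;> cases g <;> cases h <;> rfl

/-- Object part of a functor out of the graph category. -/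
def gObj {A B : Type u} {D : Type u'} [Category.{v'} D] (fA : A → D) (fB : B → D) :
    GV A B → D
  | .src a => fA a
  | .tgt b => fB b

/-- Morphism part of a functor out of the graph category. -/
def gMap {A B E : Type u} {es : E → A} {et : E → B} {D : Type u'} [Category.{v'} D]
    (fA : A → D) (fB : B → D) (fE : ∀ e, fA (es e) ⟶ fB (et e)) :
    ∀ {x y : GV A B}, GHom es et x y → (gObj fA fB x ⟶ gObj fA fB y)
  | _, _, .id x => 𝟙 (gObj fA fB x)
  | _, _, .edge e => fE e

lemma gMap_comp {A B E : Type u} {es : E → A} {et : E → B} {D : Type u'} [Category.{v'} D]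
    (fA : A → D) (fB : B → D) (fE : ∀ e, fA (es e) ⟶ fB (et e))
    {x y z : GV A B} (f : GHom es et x y) (g : GHom es et y z) :
    gMap fA fB fE (GHom.comp f g) = gMap fA fB fE f ≫ gMap fA fB fE g := by
  cases f <;> cases g <;> simp [GHom.comp, gMap]
  · exact (Category.id_comp _).symm
  · exact (Category.comp_id _).symm

/-- A functor out of the graph category. -/
def graphFunctor {A B E : Type u} (es : E → A) (et : E → B) {D : Type u'} [Category.{v'} D]
    (fA : A → D) (fB : B → D) (fE : ∀ e, fA (es e) ⟶ fB (et e)) :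
    letI := graphCat es et
    GV A B ⥤ D :=
  letI := graphCat es et
  { obj := gObj fA fB
    map := fun f => gMap fA fB fE f
    map_id := fun x => rfl
    map_comp := fun f g => gMap_comp fA fB fE f g }

lemma graphFunctor_map_edge {A B E : Type u} (es : E → A) (et : E → B) {D : Type u'}
    [Category.{v'} D] (fA : A → D) (fB : B → D) (fE : ∀ e, fA (es e) ⟶ fB (et e))
    (e : E) :
    letI := graphCat es et
    (graphFunctor es et fA fB fE).map (GHom.edge e) = fE e := rfl

/-- Encode an object as a sum. -/
def GV.toSum {A B : Type u} : GV A B → A ⊕ B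
  | .src a => Sum.inl a
  | .tgt b => Sum.inr b

lemma GV.toSum_injective {A B : Type u} : Function.Injective (GV.toSum (A := A) (B := B)) := by
  intro x y h
  cases x <;> cases y <;> simp_all [GV.toSum]

lemma mk_arrow_graph_le {A B E : Type u} (es : E → A) (et : E → B) :
    letI := graphCat es et
    Cardinal.mk (Arrow (GV A B)) ≤ Cardinal.mk ((A ⊕ B) ⊕ E) := by
  letI := graphCat es et
  apply Cardinal.mk_le_of_injective
    (f := fun a : Arrow (GV A B) =>
      (match a.hom with
        | .id x => Sum.inl x.toSum
        | .edge e => Sum.inr e : (A ⊕ B) ⊕ E))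
  rintro ⟨x, y, (f : GHom es et x y)⟩ ⟨x', y', (f' : GHom es et x' y')⟩ h
  cases f <;> cases f' <;> simp only [Sum.inl.injEq, Sum.inr.injEq] at h
  · obtain rfl := GV.toSum_injective h
    rfl
  · cases h
  · cases h
  · subst h
    rfl

lemma mk_sum_lt {α β : Type u} {κ : Cardinal.{u}} (hκ : Cardinal.aleph0 ≤ κ)
    (h1 : Cardinal.mk α < κ) (h2 : Cardinal.mk β < κ) : Cardinal.mk (α ⊕ β) < κ := by
  rw [Cardinal.mk_sum, Cardinal.lift_id, Cardinal.lift_id]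
  exact Cardinal.add_lt_of_lt hκ h1 h2

lemma mk_arrow_graph_lt {A B E : Type u} (es : E → A) (et : E → B) {κ : Cardinal.{u}}
    (hκ : Cardinal.aleph0 ≤ κ)
    (hA : Cardinal.mk A < κ) (hB : Cardinal.mk B < κ) (hE : Cardinal.mk E < κ) :
    letI := graphCat es et
    Cardinal.mk (Arrow (GV A B)) < κ :=
  lt_of_le_of_lt (mk_arrow_graph_le es et) (mk_sum_lt hκ (mk_sum_lt hκ hA hB) hE)

end Gadget

lemma finite_mk_lt {α : Type u} [Finite α] {κ : Cardinal.{u}} (hκ : Cardinal.aleph0 ≤ κ) :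
    Cardinal.mk α < κ :=
  lt_of_lt_of_le (Cardinal.lt_aleph0_of_finite α) hκ

lemma isFiltered_of_isCardinalFiltered {I : Type u} [SmallCategory I] {κ : Cardinal.{u}}
    (hreg : κ.IsRegular) (h : IsCardinalFiltered I κ) : IsFiltered I := by
  have hκ : Cardinal.aleph0 ≤ κ := hreg.aleph0_le
  have ne : Nonempty I := by
    letI := graphCat (PEmpty.elim : PEmpty.{u+1} → PEmpty.{u+1})
      (PEmpty.elim : PEmpty.{u+1} → PEmpty.{u+1})
    obtain ⟨cc⟩ := h _ (graphCat (PEmpty.elim : PEmpty.{u+1} → PEmpty.{u+1})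
        (PEmpty.elim : PEmpty.{u+1} → PEmpty.{u+1}))
      (graphFunctor _ _ (fun x : PEmpty.{u+1} => (x.elim : I))
        (fun x : PEmpty.{u+1} => (x.elim : I)) (fun e : PEmpty.{u+1} => e.elim))
      (mk_arrow_graph_lt _ _ hκ (finite_mk_lt hκ) (finite_mk_lt hκ) (finite_mk_lt hκ))
    exact ⟨cc.pt⟩
  refine { nonempty := ne, cocone_objs := ?_, cocone_maps := ?_ }
  · intro X Y
    letI := graphCat (PEmpty.elim : PEmpty.{u+1} → PEmpty.{u+1})
      (PEmpty.elim : PEmpty.{u+1} → ULift.{u} Bool)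
    obtain ⟨cc⟩ := h _ (graphCat (PEmpty.elim : PEmpty.{u+1} → PEmpty.{u+1})
        (PEmpty.elim : PEmpty.{u+1} → ULift.{u} Bool))
      (graphFunctor _ _ (fun x : PEmpty.{u+1} => (x.elim : I))
        (fun b : ULift.{u} Bool => cond b.down X Y) (fun e : PEmpty.{u+1} => e.elim))
      (mk_arrow_graph_lt _ _ hκ (finite_mk_lt hκ) (finite_mk_lt hκ) (finite_mk_lt hκ))
    exact ⟨cc.pt, cc.ι.app (GV.tgt ⟨true⟩), cc.ι.app (GV.tgt ⟨false⟩), trivial⟩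
  · intro X Y f g
    letI := graphCat (fun _ : ULift.{u} Bool => PUnit.unit)
      (fun _ : ULift.{u} Bool => PUnit.unit)
    obtain ⟨cc⟩ := h _ (graphCat (fun _ : ULift.{u} Bool => PUnit.unit)
        (fun _ : ULift.{u} Bool => PUnit.unit))
      (graphFunctor _ _ (fun _ : PUnit.{u+1} => X) (fun _ : PUnit.{u+1} => Y)
        (fun e => cond e.down f g))
      (mk_arrow_graph_lt _ _ hκ (finite_mk_lt hκ) (finite_mk_lt hκ) (finite_mk_lt hκ))
    refine ⟨cc.pt, cc.ι.app (GV.tgt PUnit.unit), ?_⟩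
    have h1 := cc.w (GHom.edge (es := fun _ : ULift.{u} Bool => PUnit.unit)
      (et := fun _ : ULift.{u} Bool => PUnit.unit) ⟨true⟩)
    have h2 := cc.w (GHom.edge (es := fun _ : ULift.{u} Bool => PUnit.unit)
      (et := fun _ : ULift.{u} Bool => PUnit.unit) ⟨false⟩)
    exact h1.trans h2.symm

lemma isPresentableObj_of_le {C : Type (u + 1)} [Category.{u} C] {κ lam : Cardinal.{u}}
    (h : κ ≤ lam) {X : C} (hX : IsPresentableObj κ X) : IsPresentableObj lam X :=
  fun J instJ hJ => hX J instJ (fun K iK F hK => hJ K iK F (lt_of_lt_of_le hK h))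

lemma mk_le_mk_arrow (J : Type u) [SmallCategory J] :
    Cardinal.mk J ≤ Cardinal.mk (Arrow J) := by
  apply Cardinal.mk_le_of_injective (f := fun j : J => Arrow.mk (𝟙 j))
  intro a b h
  exact congrArg (fun p : Arrow J => p.left) h

open Opposite in
lemma preserves_aux {C : Type (u + 1)} [Category.{u} C] {κ : Cardinal.{u}}
    (hreg : κ.IsRegular) {J : Type u} [SmallCategory J]
    (hJ : Cardinal.mk (Arrow J) < κ) {K : J ⥤ C} {c : Cocone K} (hc : IsColimit c)
    (hK : ∀ j, IsPresentableObj κ (K.obj j))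
    {I : Type u} [instI : SmallCategory I] (hI : IsCardinalFiltered I κ) :
    PreservesColimitsOfShape I (coyoneda.obj (op c.pt)) := by
  have hκ : Cardinal.aleph0 ≤ κ := hreg.aleph0_le
  have hJcard : Cardinal.mk J < κ := lt_of_le_of_lt (mk_le_mk_arrow J) hJ
  haveI : IsFiltered I := isFiltered_of_isCardinalFiltered hreg hI
  constructor
  intro G
  constructor
  intro d hd
  refine ⟨Types.FilteredColimit.isColimitOf _ _ ?_ ?_⟩
  · -- surjectivity
    intro g
    have hfac : ∀ j : J, ∃ (i : I) (h : K.obj j ⟶ G.obj i),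
        h ≫ d.ι.app i = c.ι.app j ≫ g := by
      intro j
      letI := hK j I instI hI
      have hdj : IsColimit ((coyoneda.obj (op (K.obj j))).mapCocone d) :=
        isColimitOfPreserves _ hd
      obtain ⟨i, y, hy⟩ := Types.jointly_surjective _ hdj (c.ι.app j ≫ g)
      exact ⟨i, y, by simpa using hy⟩
    choose idx hmap hfaceq using hfac
    have harr : ∀ α : Arrow J, ∃ (k : I) (uα : idx α.right ⟶ k) (vα : idx α.left ⟶ k),
        K.map α.hom ≫ hmap α.right ≫ G.map uα = hmap α.left ≫ G.map vα := by
      intro α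
      letI := hK α.left I instI hI
      have hdl : IsColimit ((coyoneda.obj (op (K.obj α.left))).mapCocone d) :=
        isColimitOfPreserves _ hd
      have heq : ((coyoneda.obj (op (K.obj α.left))).mapCocone d).ι.app (idx α.right)
            (K.map α.hom ≫ hmap α.right)
          = ((coyoneda.obj (op (K.obj α.left))).mapCocone d).ι.app (idx α.left)
            (hmap α.left) := by
        show (K.map α.hom ≫ hmap α.right) ≫ d.ι.app (idx α.right)
          = hmap α.left ≫ d.ι.app (idx α.left)
        have hw : K.map α.hom ≫ c.ι.app α.right = c.ι.app α.left := c.w α.hom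
        rw [Category.assoc, hfaceq, hfaceq, ← Category.assoc, hw]
      rw [Types.FilteredColimit.isColimit_eq_iff _ hdl] at heq
      obtain ⟨k, u, v, huv⟩ := heq
      exact ⟨k, u, v, by simpa using huv⟩
    choose kk uu vv harreq using harr
    letI := graphCat (Sum.elim (fun α : Arrow J => α.right)
        (fun α : Arrow J => α.left)) (Sum.elim (id : Arrow J → Arrow J) id)
    obtain ⟨cc⟩ := hI _ (graphCat (Sum.elim (fun α : Arrow J => α.right)
        (fun α : Arrow J => α.left)) (Sum.elim (id : Arrow J → Arrow J) id))
      (graphFunctor _ _ idx kk (fun e =>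
        match e with
        | .inl α => uu α
        | .inr α => vv α))
      (mk_arrow_graph_lt _ _ hκ hJcard hJ (mk_sum_lt hκ hJ hJ))
    have hu : ∀ α : Arrow J, uu α ≫ cc.ι.app (GV.tgt α) = cc.ι.app (GV.src α.right) :=
      fun α => cc.w (GHom.edge (Sum.inl α))
    have hv : ∀ α : Arrow J, vv α ≫ cc.ι.app (GV.tgt α) = cc.ι.app (GV.src α.left) :=
      fun α => cc.w (GHom.edge (Sum.inr α))
    have hcoc : ∀ α : Arrow J,
        K.map α.hom ≫ hmap α.right ≫ G.map (cc.ι.app (GV.src α.right))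
          = hmap α.left ≫ G.map (cc.ι.app (GV.src α.left)) := by
      intro α
      calc K.map α.hom ≫ hmap α.right ≫ G.map (cc.ι.app (GV.src α.right))
          = K.map α.hom ≫ hmap α.right ≫ G.map (uu α ≫ cc.ι.app (GV.tgt α)) := by
            rw [hu α]
        _ = (K.map α.hom ≫ hmap α.right ≫ G.map (uu α)) ≫ G.map (cc.ι.app (GV.tgt α)) := by
            erw [G.map_comp]; simp only [Category.assoc]
        _ = (hmap α.left ≫ G.map (vv α)) ≫ G.map (cc.ι.app (GV.tgt α)) := by
            rw [harreq α]
        _ = hmap α.left ≫ G.map (vv α ≫ cc.ι.app (GV.tgt α)) := by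
            erw [G.map_comp]; simp only [Category.assoc]
        _ = hmap α.left ≫ G.map (cc.ι.app (GV.src α.left)) := by rw [hv α]
    let s : Cocone K :=
      { pt := G.obj cc.pt
        ι :=
          { app := fun j => hmap j ≫ G.map (cc.ι.app (GV.src j))
            naturality := fun j j' φ => by
              dsimp
              rw [Category.comp_id]
              exact hcoc (Arrow.mk φ) } }
    refine ⟨cc.pt, hc.desc s, ?_⟩
    show g = hc.desc s ≫ d.ι.app cc.pt
    refine hc.hom_ext (fun j => ?_)
    rw [← Category.assoc, hc.fac]
    show c.ι.app j ≫ g = (hmap j ≫ G.map (cc.ι.app (GV.src j))) ≫ d.ι.app cc.pt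
    have hw2 : G.map (cc.ι.app (GV.src j)) ≫ d.ι.app cc.pt = d.ι.app (idx j) :=
      d.w (cc.ι.app (GV.src j))
    rw [Category.assoc]; erw [hw2]; rw [hfaceq]
  · -- injectivity
    intro i i' u v huv
    have huv' : u ≫ d.ι.app i = v ≫ d.ι.app i' := huv
    have hstep : ∀ j : J, ∃ (k : I) (f : i ⟶ k) (f' : i' ⟶ k),
        c.ι.app j ≫ u ≫ G.map f = c.ι.app j ≫ v ≫ G.map f' := by
      intro j
      letI := hK j I instI hI
      have hdj : IsColimit ((coyoneda.obj (op (K.obj j))).mapCocone d) :=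
        isColimitOfPreserves _ hd
      have heq : ((coyoneda.obj (op (K.obj j))).mapCocone d).ι.app i (c.ι.app j ≫ u)
          = ((coyoneda.obj (op (K.obj j))).mapCocone d).ι.app i' (c.ι.app j ≫ v) := by
        show (c.ι.app j ≫ u) ≫ d.ι.app i = (c.ι.app j ≫ v) ≫ d.ι.app i'
        rw [Category.assoc, Category.assoc, huv']
      rw [Types.FilteredColimit.isColimit_eq_iff _ hdj] at heq
      obtain ⟨k, f, f', hff⟩ := heq
      exact ⟨k, f, f', by simpa using hff⟩
    choose kk uu vv hkeq using hstep
    letI := graphCat (Sum.elim (fun _ : J => (⟨true⟩ : ULift.{u} Bool))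
        (fun _ : J => (⟨false⟩ : ULift.{u} Bool))) (Sum.elim (id : J → J) id)
    obtain ⟨cc⟩ := hI _ (graphCat (Sum.elim (fun _ : J => (⟨true⟩ : ULift.{u} Bool))
        (fun _ : J => (⟨false⟩ : ULift.{u} Bool))) (Sum.elim (id : J → J) id))
      (graphFunctor _ _ (fun b : ULift.{u} Bool => cond b.down i i') kk (fun e =>
        match e with
        | .inl j => uu j
        | .inr j => vv j))
      (mk_arrow_graph_lt _ _ hκ (finite_mk_lt hκ) hJcard (mk_sum_lt hκ hJcard hJcard))
    have hu : ∀ j : J, uu j ≫ cc.ι.app (GV.tgt j) = cc.ι.app (GV.src ⟨true⟩) :=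
      fun j => cc.w (GHom.edge (Sum.inl j))
    have hv : ∀ j : J, vv j ≫ cc.ι.app (GV.tgt j) = cc.ι.app (GV.src ⟨false⟩) :=
      fun j => cc.w (GHom.edge (Sum.inr j))
    refine ⟨cc.pt, cc.ι.app (GV.src ⟨true⟩), cc.ι.app (GV.src ⟨false⟩), ?_⟩
    show u ≫ G.map (cc.ι.app (GV.src ⟨true⟩)) = v ≫ G.map (cc.ι.app (GV.src ⟨false⟩))
    refine hc.hom_ext (fun j => ?_)
    calc c.ι.app j ≫ u ≫ G.map (cc.ι.app (GV.src ⟨true⟩))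
        = c.ι.app j ≫ u ≫ G.map (uu j ≫ cc.ι.app (GV.tgt j)) := by rw [hu j]
      _ = (c.ι.app j ≫ u ≫ G.map (uu j)) ≫ G.map (cc.ι.app (GV.tgt j)) := by
          erw [G.map_comp]; simp only [Category.assoc]
      _ = (c.ι.app j ≫ v ≫ G.map (vv j)) ≫ G.map (cc.ι.app (GV.tgt j)) := by
          rw [hkeq j]
      _ = c.ι.app j ≫ v ≫ G.map (vv j ≫ cc.ι.app (GV.tgt j)) := by
          erw [G.map_comp]; simp only [Category.assoc]
      _ = c.ι.app j ≫ v ≫ G.map (cc.ι.app (GV.src ⟨false⟩)) := by rw [hv j]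

lemma presentableObj_colimit {C : Type (u + 1)} [Category.{u} C] {κ : Cardinal.{u}}
    (hreg : κ.IsRegular) {J : Type u} [SmallCategory J]
    (hJ : Cardinal.mk (Arrow J) < κ) {K : J ⥤ C} {c : Cocone K} (hc : IsColimit c)
    (hK : ∀ j, IsPresentableObj κ (K.obj j)) : IsPresentableObj κ c.pt :=
  fun I instI hI => preserves_aux hreg hJ hc hK (instI := instI) hI

lemma isIso_app_of_isColimit {C : Type*} [Category C] {T : Type*} [Category T]
    {A B : C ⥤ T} (τ : A ⟶ B) {J : Type*} [Category J] {K : J ⥤ C} {c : Cocone K}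
    (hA : IsColimit (A.mapCocone c)) (hB : IsColimit (B.mapCocone c))
    (h : ∀ j, IsIso (τ.app (K.obj j))) : IsIso (τ.app c.pt) := by
  haveI := h
  let w : K ⋙ A ≅ K ⋙ B :=
    NatIso.ofComponents (fun j => asIso (τ.app (K.obj j))) (fun φ => τ.naturality _)
  have : τ.app c.pt = (IsColimit.coconePointsIsoOfNatIso hA hB w).hom := by
    refine hA.hom_ext (fun j => ?_)
    rw [IsColimit.comp_coconePointsIsoOfNatIso_hom]
    show A.map (c.ι.app j) ≫ τ.app c.pt = w.hom.app j ≫ B.map (c.ι.app j)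
    have : w.hom.app j = τ.app (K.obj j) := rfl
    rw [this]
    exact τ.naturality (c.ι.app j)
  rw [this]
  infer_instance

lemma isIso_app_of_isLimit {C : Type*} [Category C] {T : Type*} [Category T]
    {A B : C ⥤ T} (τ : A ⟶ B) {J : Type*} [Category J] {K : J ⥤ C} {c : Cone K}
    (hA : IsLimit (A.mapCone c)) (hB : IsLimit (B.mapCone c))
    (h : ∀ j, IsIso (τ.app (K.obj j))) : IsIso (τ.app c.pt) := by
  haveI := h
  let w : K ⋙ A ≅ K ⋙ B :=
    NatIso.ofComponents (fun j => asIso (τ.app (K.obj j))) (fun φ => τ.naturality _)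
  have : τ.app c.pt = (IsLimit.conePointsIsoOfNatIso hA hB w).hom := by
    refine hB.hom_ext (fun j => ?_)
    rw [IsLimit.conePointsIsoOfNatIso_hom_comp]
    show τ.app c.pt ≫ B.map (c.π.app j) = A.map (c.π.app j) ≫ w.hom.app j
    have : w.hom.app j = τ.app (K.obj j) := rfl
    rw [this]
    exact (τ.naturality (c.π.app j)).symm
  rw [this]
  infer_instance

open Opposite in
theorem prr_epi_mono {C D : Type (u + 1)} [Category.{u} C] [Category.{u} D]
    (hC : LocallyPresentable C)
    {F : C ⥤ D} {G : D ⥤ C} (adj : F ⊣ G)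
    (hgen : ∀ κ : Cardinal.{u}, κ.IsRegular →
      ∀ P : Set C, setOf G.essImage ⊆ P → IsoClosed P → LimitClosed.{u} P →
        FilteredColimitClosed.{u} κ P → ∀ X : C, X ∈ P) :
    F.ReflectsIsomorphisms := by
  constructor
  intro X Y f hf
  haveI := hf
  obtain ⟨-, κ₀, hκ₀, -, hpres⟩ := hC
  obtain ⟨JX, iX, KX, cX, hJXf, hKXp, hptX, ⟨hcX⟩⟩ := hpres X
  obtain ⟨JY, iY, KY, cY, hJYf, hKYp, hptY, ⟨hcY⟩⟩ := hpres Y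
  letI := iX
  letI := iY
  set lam := Order.succ (κ₀ ⊔ Cardinal.mk (Arrow JX) ⊔ Cardinal.mk (Arrow JY)) with hlamdef
  have hκ₀lam : κ₀ ≤ lam := le_trans (le_trans le_sup_left le_sup_left) (Order.le_succ _)
  have hlamreg : lam.IsRegular :=
    Cardinal.isRegular_succ (le_trans hκ₀.aleph0_le (le_trans le_sup_left le_sup_left))
  have hAX : Cardinal.mk (Arrow JX) < lam :=
    Order.lt_succ_iff.mpr (le_trans le_sup_right le_sup_left)
  have hAY : Cardinal.mk (Arrow JY) < lam := Order.lt_succ_iff.mpr le_sup_right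
  have hX : IsPresentableObj lam X :=
    hptX ▸ presentableObj_colimit hlamreg hAX hcX
      (fun j => isPresentableObj_of_le hκ₀lam (hKXp j))
  have hY : IsPresentableObj lam Y :=
    hptY ▸ presentableObj_colimit hlamreg hAY hcY
      (fun j => isPresentableObj_of_le hκ₀lam (hKYp j))
  let τ : coyoneda.obj (op Y) ⟶ coyoneda.obj (op X) := coyoneda.map f.op
  let P : Set C := {Z | IsIso (τ.app Z)}
  have hiso : IsoClosed P := by
    rintro Z Z' hZ ⟨e⟩
    haveI : IsIso (τ.app Z) := hZ
    have heq : τ.app Z' = CategoryTheory.inv ((coyoneda.obj (op Y)).map e.hom) ≫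
        τ.app Z ≫ (coyoneda.obj (op X)).map e.hom := by
      rw [← τ.naturality e.hom, IsIso.inv_hom_id_assoc]
    show IsIso (τ.app Z')
    rw [heq]
    infer_instance
  have hGmem : ∀ W : D, G.obj W ∈ P := by
    intro W
    let eqv : (Y ⟶ G.obj W) ≃ (X ⟶ G.obj W) :=
      (adj.homEquiv Y W).symm.trans
        ((Equiv.mk (fun g => F.map f ≫ g) (fun g => CategoryTheory.inv (F.map f) ≫ g)
          (fun g => by simp) (fun g => by simp)).trans (adj.homEquiv X W))
    have heq : τ.app (G.obj W) = fun g => eqv g := by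
      funext g
      show f ≫ g = adj.homEquiv X W (F.map f ≫ (adj.homEquiv Y W).symm g)
      rw [Adjunction.homEquiv_naturality_left, Equiv.apply_symm_apply]
    show IsIso (τ.app (G.obj W))
    exact (isIso_iff_bijective _).mpr (by rw [heq]; exact eqv.bijective)
  have hsub : setOf G.essImage ⊆ P := by
    rintro Z ⟨W, ⟨e⟩⟩
    exact hiso (hGmem W) ⟨e⟩
  have hlim : LimitClosed.{u} P := by
    intro J' instJ' K cn hcn hmem
    obtain ⟨hcn⟩ := hcn
    letI := instJ'
    have hA : IsLimit ((coyoneda.obj (op Y)).mapCone cn) := isLimitOfPreserves _ hcn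
    have hB : IsLimit ((coyoneda.obj (op X)).mapCone cn) := isLimitOfPreserves _ hcn
    exact isIso_app_of_isLimit τ hA hB hmem
  have hfilt : FilteredColimitClosed.{u} lam P := by
    intro I instI hIf K dd hdd hmem
    obtain ⟨hdd⟩ := hdd
    letI := instI
    letI := hY I instI hIf
    letI := hX I instI hIf
    have hA : IsColimit ((coyoneda.obj (op Y)).mapCocone dd) := isColimitOfPreserves _ hdd
    have hB : IsColimit ((coyoneda.obj (op X)).mapCocone dd) := isColimitOfPreserves _ hdd
    exact isIso_app_of_isColimit τ hA hB hmem
  have hall := hgen lam hlamreg P hsub hiso hlim hfilt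
  haveI : ∀ Z : C, IsIso (τ.app Z) := fun Z => hall Z
  haveI : IsIso τ := NatIso.isIso_of_isIso_app τ
  haveI : IsIso (coyoneda.map f.op) := this
  haveI : IsIso f.op := Coyoneda.isIso f.op
  exact isIso_of_op f

end Paper
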